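/- Let n ≥ 1, let 0 < γ < ω, let r > 0, K > 0, T > 0, and let C ≥ K(n + γ). Let F : [0,T] → (0,∞) be differentiable with F(0) ≤ r^{-(n+γ)} and F′(s) ≤ −C (r + Ks)^{-(ω−γ)/(n+ω)} F(s)^{1 + 1/(n+ω)} for all s ∈ [0,T]. Then F(s) ≤ (r + Ks)^{-(n+γ)} for all s ∈ [0,T]. -/

import Mathlib

open MeasureTheory

/-- ODE comparison argument for the height condition: a positive differentiable function on
`[0,T]` with `F(0) ≤ r^{-(n+γ)}` satisfying
`F' ≤ -C (r+Ks)^{-(ω-γ)/(n+ω)} F^{1+1/(n+ω)}` with `C ≥ K(n+γ)` stays below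
`(r+Ks)^{-(n+γ)}`. -/
theorem height_ODE_comparison
    (n : ℕ) (hn : 1 ≤ n) (γ ω r K T C : ℝ)
    (hγ0 : 0 < γ) (hγω : γ < ω) (hr : 0 < r) (hK : 0 < K) (hT : 0 < T)
    (hC : K * ((n : ℝ) + γ) ≤ C)
    (F F' : ℝ → ℝ)
    (hderiv : ∀ s ∈ Set.Icc (0 : ℝ) T, HasDerivWithinAt F (F' s) (Set.Icc (0 : ℝ) T) s)
    (hpos : ∀ s ∈ Set.Icc (0 : ℝ) T, 0 < F s)
    (h0 : F 0 ≤ r ^ (-((n : ℝ) + γ)))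
    (hF' : ∀ s ∈ Set.Icc (0 : ℝ) T,
      F' s ≤ -C * (r + K * s) ^ (-(ω - γ) / ((n : ℝ) + ω)) *
        F s ^ (1 + 1 / ((n : ℝ) + ω))) :
    ∀ s ∈ Set.Icc (0 : ℝ) T, F s ≤ (r + K * s) ^ (-((n : ℝ) + γ)) := by
  set N : ℝ := (n : ℝ) + ω with hNdef
  have hn1 : (1 : ℝ) ≤ (n : ℝ) := by exact_mod_cast hn
  have hω : 0 < ω := hγ0.trans hγω
  have hN : 0 < N := by positivity
  set a : ℝ := ((n : ℝ) + γ) / N with hadef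
  have ha : 0 < a := by positivity
  -- base positivity
  have hbase : ∀ s ∈ Set.Icc (0 : ℝ) T, 0 < r + K * s := fun s hs => by
    have := hs.1; nlinarith
  set g : ℝ → ℝ := fun s => F s ^ (-(1 / N)) - (r + K * s) ^ a with hgdef
  set g' : ℝ → ℝ := fun s =>
    F' s * (-(1 / N)) * F s ^ (-(1 / N) - 1) - K * 1 * a * (r + K * s) ^ (a - 1)
    with hg'def
  -- continuity of F on Icc
  have hFcont : ContinuousOn F (Set.Icc (0 : ℝ) T) :=
    fun s hs => (hderiv s hs).continuousWithinAt
  have hgcont : ContinuousOn g (Set.Icc (0 : ℝ) T) := by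
    apply ContinuousOn.sub
    · exact fun s hs => (hFcont s hs).rpow_const (Or.inl (hpos s hs).ne')
    · exact fun s hs =>
        (((continuousWithinAt_const.mul continuousWithinAt_id).const_add r)).rpow_const
          (Or.inl (hbase s hs).ne')
  -- derivative of g on the interior
  have hgderiv : ∀ x ∈ Set.Ioo (0 : ℝ) T,
      HasDerivWithinAt g (g' x) (Set.Ioo (0 : ℝ) T) x := by
    intro x hx
    have hxI : x ∈ Set.Icc (0 : ℝ) T := Set.Ioo_subset_Icc_self hx
    have h1 : HasDerivWithinAt (fun y => F y ^ (-(1 / N)))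
        (F' x * (-(1 / N)) * F x ^ (-(1 / N) - 1)) (Set.Ioo (0 : ℝ) T) x :=
      ((hderiv x hxI).mono Set.Ioo_subset_Icc_self).rpow_const (Or.inl (hpos x hxI).ne')
    have h2 : HasDerivWithinAt (fun y => (r + K * y) ^ a)
        (K * 1 * a * (r + K * x) ^ (a - 1)) (Set.Ioo (0 : ℝ) T) x := by
      have hlin : HasDerivWithinAt (fun y => r + K * y) (K * 1) (Set.Ioo (0 : ℝ) T) x :=
        (((hasDerivAt_id x).const_mul K).const_add r).hasDerivWithinAt
      exact hlin.rpow_const (Or.inl (hbase x hxI).ne')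
    exact h1.sub h2
  -- the derivative is nonnegative on the interior
  have hg'pos : ∀ x ∈ Set.Ioo (0 : ℝ) T, 0 ≤ g' x := by
    intro x hx
    have hxI : x ∈ Set.Icc (0 : ℝ) T := Set.Ioo_subset_Icc_self hx
    have hFx : 0 < F x := hpos x hxI
    have hbx : 0 < r + K * x := hbase x hxI
    have hP : 0 < (r + K * x) ^ (-(ω - γ) / N) := Real.rpow_pos_of_pos hbx _
    have hQ : 0 < F x ^ (-(1 / N) - 1) := Real.rpow_pos_of_pos hFx _
    have hE : F x ^ (1 + 1 / N) * F x ^ (-(1 / N) - 1) = 1 := by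
      rw [← Real.rpow_add hFx, show (1 + 1/N) + (-(1/N) - 1) = 0 by ring, Real.rpow_zero]
    -- from hF', multiply by the negative factor
    have key : C / N * (r + K * x) ^ (-(ω - γ) / N)
        ≤ F' x * (-(1 / N)) * F x ^ (-(1 / N) - 1) := by
      have h := hF' x hxI
      have := mul_le_mul_of_nonneg_right h (le_of_lt hQ)
      have hmul : F' x * F x ^ (-(1 / N) - 1)
          ≤ -C * (r + K * x) ^ (-(ω - γ) / N) := by
        calc F' x * F x ^ (-(1 / N) - 1)
            ≤ -C * (r + K * x) ^ (-(ω - γ) / N) * F x ^ (1 + 1 / N)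
              * F x ^ (-(1 / N) - 1) := this
          _ = -C * (r + K * x) ^ (-(ω - γ) / N)
              * (F x ^ (1 + 1 / N) * F x ^ (-(1 / N) - 1)) := by ring
          _ = -C * (r + K * x) ^ (-(ω - γ) / N) := by rw [hE, mul_one]
      have h3 := mul_le_mul_of_nonpos_right hmul (neg_nonpos.mpr (by positivity : (0:ℝ) ≤ 1 / N))
      calc C / N * (r + K * x) ^ (-(ω - γ) / N)
          = -C * (r + K * x) ^ (-(ω - γ) / N) * (-(1 / N)) := by ring
        _ ≤ F' x * F x ^ (-(1 / N) - 1) * (-(1 / N)) := h3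
        _ = F' x * (-(1 / N)) * F x ^ (-(1 / N) - 1) := by ring
    have ha1 : a - 1 = -(ω - γ) / N := by
      field_simp [hadef]
      have haN : a * N = (n : ℝ) + γ := by rw [hadef]; field_simp
      linarith [hNdef]
    have hcomp : K * 1 * a * (r + K * x) ^ (a - 1)
        ≤ C / N * (r + K * x) ^ (-(ω - γ) / N) := by
      rw [ha1]
      have : K * 1 * a = K * ((n : ℝ) + γ) / N := by
        rw [hadef]; ring
      rw [this]
      gcongr
    simp only [hg'def, sub_nonneg]
    exact hcomp.trans key
  -- monotonicity of g
  have hmono : MonotoneOn g (Set.Icc (0 : ℝ) T) := by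
    apply monotoneOn_of_hasDerivWithinAt_nonneg (convex_Icc 0 T) hgcont
    · rw [interior_Icc]; exact hgderiv
    · rw [interior_Icc]; exact hg'pos
  -- g 0 ≥ 0
  have h0I : (0 : ℝ) ∈ Set.Icc (0 : ℝ) T := ⟨le_refl _, hT.le⟩
  have hg0 : 0 ≤ g 0 := by
    have h1 : (r ^ (-((n : ℝ) + γ))) ^ (-(1 / N)) ≤ F 0 ^ (-(1 / N)) :=
      Real.rpow_le_rpow_of_nonpos (hpos 0 h0I) h0 (neg_nonpos.mpr (by positivity))
    have h2 : (r ^ (-((n : ℝ) + γ))) ^ (-(1 / N)) = (r + K * 0) ^ a := by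
      rw [mul_zero, add_zero, ← Real.rpow_mul hr.le]
      congr 1
      rw [hadef]; field_simp
    simp only [hgdef, sub_nonneg]
    rw [← h2]; exact h1
  intro s hs
  have hgs : 0 ≤ g s := hg0.trans (hmono h0I hs hs.1)
  have hkey : (r + K * s) ^ a ≤ F s ^ (-(1 / N)) := by
    have := hgs; simp only [hgdef, sub_nonneg] at this; exact this
  have hbs : 0 < (r + K * s) ^ a := Real.rpow_pos_of_pos (hbase s hs) _
  have := Real.rpow_le_rpow_of_nonpos hbs hkey (by linarith : -N ≤ 0)
  calc F s = (F s ^ (-(1 / N))) ^ (-N) := by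
        rw [← Real.rpow_mul (hpos s hs).le]
        rw [show -(1 / N) * -N = 1 by field_simp]
        exact (Real.rpow_one _).symm
    _ ≤ ((r + K * s) ^ a) ^ (-N) := this
    _ = (r + K * s) ^ (-((n : ℝ) + γ)) := by
        rw [← Real.rpow_mul (hbase s hs).le]
        congr 1
        rw [hadef]; field_simp
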